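/- Let ς be a random vector in ℝⁿ with finite fourth moment, mean μ and covariance Σ, and suppose its fourth moment satisfies the identity E[‖ς‖⁴] = ‖Σ‖_F² + 2(Tr Σ)² + 4 μᵀΣμ + ‖μ‖⁴ (as holds, for instance, for Gaussian ς). Suppose μμᵀ ⪯ Γ_μ and Σ ⪯ Γ_Σ for symmetric positive semidefinite matrices Γ_μ, Γ_Σ ∈ ℝ^{n×n}. Let Z¹, …, Z^N be independent random vectors each with the same law as ς. Then for every ε > 0, P( ‖ (1/N) Σ_{i=1}^N Zⁱ(Zⁱ)ᵀ − E[ςςᵀ] ‖_F < ε ) ≥ 1 − (2/(N ε²)) · ( (Tr Γ_Σ)² + λmax(Γ_Σ) · Tr Γ_μ ). -/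

import Mathlib

open MeasureTheory ProbabilityTheory Matrix

/-- Euclidean norm of a vector in `ℝⁿ`. -/
noncomputable def euclNorm {n : ℕ} (x : Fin n → ℝ) : ℝ := Real.sqrt (∑ i, (x i) ^ 2)

/-- Frobenius norm of a real matrix. -/
noncomputable def frobNorm {n m : ℕ} (A : Matrix (Fin n) (Fin m) ℝ) : ℝ :=
  Real.sqrt (∑ i, ∑ j, (A i j) ^ 2)

/-- Largest eigenvalue of a real symmetric matrix. -/
noncomputable def lamMax {n : ℕ} {A : Matrix (Fin n) (Fin n) ℝ} (hA : A.IsHermitian) : ℝ :=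
  ⨆ i, hA.eigenvalues i

lemma euclNorm_sq {n : ℕ} (x : Fin n → ℝ) : euclNorm x ^ 2 = ∑ i, x i ^ 2 := by
  rw [euclNorm, Real.sq_sqrt]; positivity

lemma frobNorm_sq {n m : ℕ} (A : Matrix (Fin n) (Fin m) ℝ) :
    frobNorm A ^ 2 = ∑ i, ∑ j, (A i j) ^ 2 := by
  rw [frobNorm, Real.sq_sqrt]; positivity

lemma euclNorm_pow_four {n : ℕ} (x : Fin n → ℝ) :
    euclNorm x ^ 4 = ∑ j, ∑ k, x j * x k * (x j * x k) := by
  have h : euclNorm x ^ 4 = (∑ i, x i ^ 2) * (∑ i, x i ^ 2) := by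
    rw [show (4:ℕ) = 2*2 from rfl, pow_mul, euclNorm_sq, sq]
  rw [h, Finset.sum_mul_sum]
  exact Finset.sum_congr rfl fun j _ => Finset.sum_congr rfl fun k _ => by ring

lemma psd_quad {n : ℕ} {A : Matrix (Fin n) (Fin n) ℝ} (hA : A.PosSemidef) (x : Fin n → ℝ) :
    0 ≤ x ⬝ᵥ A.mulVec x := by
  have := hA.dotProduct_mulVec_nonneg x
  simpa using this

lemma psd_diag {n : ℕ} {A : Matrix (Fin n) (Fin n) ℝ} (hA : A.PosSemidef) (i : Fin n) :
    0 ≤ A i i := by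
  have := psd_quad hA (Pi.single i 1)
  simpa [dotProduct, mulVec, Pi.single_apply, Finset.mul_sum] using this

lemma lamMax_nonneg {n : ℕ} {A : Matrix (Fin n) (Fin n) ℝ} (hA : A.PosSemidef) :
    0 ≤ lamMax hA.isHermitian := by
  rcases isEmpty_or_nonempty (Fin n) with h | h
  · simp [lamMax, Real.iSup_of_isEmpty]
  · exact le_ciSup_of_le (Set.finite_range _).bddAbove h.some (hA.eigenvalues_nonneg _)

lemma dot_adjoint {n : ℕ} (U : Matrix (Fin n) (Fin n) ℝ) (x y : Fin n → ℝ) :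
    (Uᵀ *ᵥ x) ⬝ᵥ y = x ⬝ᵥ (U *ᵥ y) := by
  simp only [dotProduct, mulVec, dotProduct, transpose_apply, Finset.sum_mul, Finset.mul_sum]
  rw [Finset.sum_comm]
  exact Finset.sum_congr rfl fun j _ => Finset.sum_congr rfl fun k _ => by ring

lemma quad_le_lamMax {n : ℕ} {A : Matrix (Fin n) (Fin n) ℝ} (hA : A.IsHermitian)
    (x : Fin n → ℝ) : x ⬝ᵥ A.mulVec x ≤ lamMax hA * (x ⬝ᵥ x) := by
  classical
  set U : Matrix (Fin n) (Fin n) ℝ := (hA.eigenvectorUnitary : Matrix (Fin n) (Fin n) ℝ) with hUdef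
  have hstar : star U = Uᵀ := by
    rw [star_eq_conjTranspose, conjTranspose]
    ext i j; simp
  have hdiag : (diagonal (RCLike.ofReal ∘ hA.eigenvalues) : Matrix (Fin n) (Fin n) ℝ)
      = diagonal hA.eigenvalues := by
    congr 1
  set y := Uᵀ *ᵥ x with hy
  have hyy : y ⬝ᵥ y = x ⬝ᵥ x := by
    rw [hy, dot_adjoint, mulVec_mulVec]
    have hUU : U * Uᵀ = 1 := by
      rw [← hstar]; exact (Matrix.mem_unitaryGroup_iff).mp hA.eigenvectorUnitary.2
    rw [hUU, one_mulVec]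
  have hquad : x ⬝ᵥ A.mulVec x = ∑ i, hA.eigenvalues i * y i ^ 2 := by
    conv_lhs => rw [hA.spectral_theorem]
    rw [hdiag, Unitary.conjStarAlgAut_apply, ← hUdef, hstar, Matrix.mul_assoc, ← mulVec_mulVec, ← mulVec_mulVec,
      ← dot_adjoint U x _, ← hy]
    simp only [dotProduct, mulVec_diagonal]
    exact Finset.sum_congr rfl fun i _ => by ring
  have hsum : ∑ i, hA.eigenvalues i * y i ^ 2 ≤ lamMax hA * ∑ i, y i ^ 2 := by
    rw [Finset.mul_sum]
    refine Finset.sum_le_sum fun i _ => ?_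
    exact mul_le_mul_of_nonneg_right (le_ciSup (Set.finite_range _).bddAbove i) (sq_nonneg _)
  calc x ⬝ᵥ A.mulVec x = ∑ i, hA.eigenvalues i * y i ^ 2 := hquad
    _ ≤ lamMax hA * ∑ i, y i ^ 2 := hsum
    _ = lamMax hA * (x ⬝ᵥ x) := by
        rw [← hyy]; congr 1; simp [dotProduct, sq]

/-- **(Statement 0)** Chebyshev-type concentration of the empirical second-moment matrix
in the Frobenius norm. -/
theorem empirical_second_moment_concentration
    {n N : ℕ} (hN : 0 < N)
    {Ω : Type*} [MeasurableSpace Ω] {P : Measure Ω} [IsProbabilityMeasure P]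
    -- the random vector ς, with finite fourth moment
    (ς : Ω → Fin n → ℝ) (hςmeas : Measurable ς)
    (hint1 : ∀ i, Integrable (fun ω => ς ω i) P)
    (hint2 : ∀ i j, Integrable (fun ω => ς ω i * ς ω j) P)
    (hint4 : ∀ i j k l, Integrable (fun ω => ς ω i * ς ω j * (ς ω k * ς ω l)) P)
    (hintnorm4 : Integrable (fun ω => euclNorm (ς ω) ^ 4) P)
    -- mean and covariance
    (μ : Fin n → ℝ) (hμ : ∀ i, μ i = ∫ ω, ς ω i ∂P)
    (Sm : Matrix (Fin n) (Fin n) ℝ)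
    (hSm : ∀ i j, Sm i j = ∫ ω, (ς ω i - μ i) * (ς ω j - μ j) ∂P)
    -- second-moment matrix E[ςςᵀ]
    (M : Matrix (Fin n) (Fin n) ℝ)
    (hM : ∀ i j, M i j = ∫ ω, ς ω i * ς ω j ∂P)
    -- the fourth-moment identity
    (h4 : ∫ ω, euclNorm (ς ω) ^ 4 ∂P =
      frobNorm Sm ^ 2 + 2 * Sm.trace ^ 2 + 4 * (μ ⬝ᵥ Sm.mulVec μ) + euclNorm μ ^ 4)
    -- the bounding matrices
    (Gm GS : Matrix (Fin n) (Fin n) ℝ)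
    (hGm : Gm.PosSemidef) (hGS : GS.PosSemidef)
    (hμbd : (Gm - vecMulVec μ μ).PosSemidef)
    (hSmbd : (GS - Sm).PosSemidef)
    -- the independent samples, each with the same law as ς
    (Z : Fin N → Ω → Fin n → ℝ) (hZmeas : ∀ i, Measurable (Z i))
    (hZindep : iIndepFun Z P)
    (hZlaw : ∀ i, Measure.map (Z i) P = Measure.map ς P)
    (ε : ℝ) (hε : 0 < ε) :
    1 - 2 / (N * ε ^ 2) * (GS.trace ^ 2 + lamMax hGS.isHermitian * Gm.trace) ≤
      (P {ω | frobNorm ((N : ℝ)⁻¹ • ∑ i, vecMulVec (Z i ω) (Z i ω) - M) < ε}).toReal := by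
  classical
  have hNR : (0:ℝ) < (N:ℝ) := by exact_mod_cast hN
  -- transfer of integrability and integrals along the law
  have keyInt : ∀ (g : (Fin n → ℝ) → ℝ), Measurable g → ∀ i : Fin N,
      (Integrable (fun ω => g (Z i ω)) P ↔ Integrable (fun ω => g (ς ω)) P) := by
    intro g hg i
    have h1 : Integrable (g ∘ (Z i)) P ↔ Integrable g (Measure.map (Z i) P) :=
      (integrable_map_measure hg.aestronglyMeasurable (hZmeas i).aemeasurable).symm
    have h2 : Integrable g (Measure.map ς P) ↔ Integrable (g ∘ ς) P :=
      integrable_map_measure hg.aestronglyMeasurable hςmeas.aemeasurable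
    rw [hZlaw i] at h1
    exact h1.trans h2
  have keyEq : ∀ (g : (Fin n → ℝ) → ℝ), Measurable g → ∀ i : Fin N,
      ∫ ω, g (Z i ω) ∂P = ∫ ω, g (ς ω) ∂P := by
    intro g hg i
    have h1 : ∫ x, g x ∂(Measure.map (Z i) P) = ∫ ω, g (Z i ω) ∂P :=
      integral_map (hZmeas i).aemeasurable hg.aestronglyMeasurable
    have h2 : ∫ x, g x ∂(Measure.map ς P) = ∫ ω, g (ς ω) ∂P :=
      integral_map hςmeas.aemeasurable hg.aestronglyMeasurable
    rw [hZlaw i] at h1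
    rw [← h1, h2]
  have mZ : ∀ (i : Fin N) (j : Fin n), Measurable fun ω => Z i ω j :=
    fun i j => (measurable_pi_apply j).comp (hZmeas i)
  have mg2 : ∀ j k : Fin n, Measurable fun x : Fin n → ℝ => x j * x k :=
    fun j k => (measurable_pi_apply j).mul (measurable_pi_apply k)
  -- centered products
  have intY : ∀ (j k : Fin n) (i : Fin N),
      Integrable (fun ω => Z i ω j * Z i ω k - M j k) P :=
    fun j k i => (keyInt (fun x => x j * x k - M j k) ((mg2 j k).sub measurable_const) i).mpr
      ((hint2 j k).sub (integrable_const _))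
  have EY : ∀ (j k : Fin n) (i : Fin N), ∫ ω, (Z i ω j * Z i ω k - M j k) ∂P = 0 := by
    intro j k i
    have h1 : ∫ ω, (Z i ω j * Z i ω k - M j k) ∂P = ∫ ω, (ς ω j * ς ω k - M j k) ∂P :=
      keyEq (fun x => x j * x k - M j k) ((mg2 j k).sub measurable_const) i
    rw [h1, integral_sub (hint2 j k) (integrable_const _), ← hM j k, integral_const]
    simp
  have sqint : ∀ (j k : Fin n) (i : Fin N),
      Integrable (fun ω => (Z i ω j * Z i ω k - M j k) * (Z i ω j * Z i ω k - M j k)) P := by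
    intro j k i
    refine (keyInt (fun x => (x j * x k - M j k) * (x j * x k - M j k))
      (((mg2 j k).sub measurable_const).mul ((mg2 j k).sub measurable_const)) i).mpr ?_
    have hfe : (fun ω => (ς ω j * ς ω k - M j k) * (ς ω j * ς ω k - M j k))
        = fun ω => ς ω j * ς ω k * (ς ω j * ς ω k) - 2 * M j k * (ς ω j * ς ω k)
            + M j k * M j k := funext fun ω => by ring
    rw [hfe]
    exact ((hint4 j k j k).sub ((hint2 j k).const_mul _)).add (integrable_const _)
  have EYsq : ∀ (j k : Fin n) (i : Fin N),
      ∫ ω, (Z i ω j * Z i ω k - M j k) * (Z i ω j * Z i ω k - M j k) ∂P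
        = (∫ ω, ς ω j * ς ω k * (ς ω j * ς ω k) ∂P) - M j k ^ 2 := by
    intro j k i
    have h1 : ∫ ω, (Z i ω j * Z i ω k - M j k) * (Z i ω j * Z i ω k - M j k) ∂P
        = ∫ ω, (ς ω j * ς ω k - M j k) * (ς ω j * ς ω k - M j k) ∂P :=
      keyEq (fun x => (x j * x k - M j k) * (x j * x k - M j k))
        (((mg2 j k).sub measurable_const).mul ((mg2 j k).sub measurable_const)) i
    have hfe : (fun ω => (ς ω j * ς ω k - M j k) * (ς ω j * ς ω k - M j k))
        = fun ω => ς ω j * ς ω k * (ς ω j * ς ω k) - 2 * M j k * (ς ω j * ς ω k)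
            + M j k * M j k := funext fun ω => by ring
    have I2 : Integrable (fun ω => 2 * M j k * (ς ω j * ς ω k)) P :=
      (hint2 j k).const_mul _
    have I1 : Integrable (fun ω => ς ω j * ς ω k * (ς ω j * ς ω k)
        - 2 * M j k * (ς ω j * ς ω k)) P := (hint4 j k j k).sub I2
    rw [h1, hfe, integral_add I1 (integrable_const _),
      integral_sub (hint4 j k j k) I2,
      integral_const_mul, ← hM j k, integral_const]
    simp only [measure_univ, probReal_univ, ENNReal.toReal_one, smul_eq_mul, one_mul]
    ring
  -- cross terms vanish by independence
  have hcross : ∀ (j k : Fin n) (i l : Fin N), i ≠ l →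
      (∫ ω, (Z i ω j * Z i ω k - M j k) * (Z l ω j * Z l ω k - M j k) ∂P = 0)
      ∧ Integrable (fun ω => (Z i ω j * Z i ω k - M j k) * (Z l ω j * Z l ω k - M j k)) P := by
    intro j k i l hil
    have hind : IndepFun (fun ω => Z i ω j * Z i ω k - M j k)
        (fun ω => Z l ω j * Z l ω k - M j k) P :=
      (hZindep.indepFun hil).comp ((mg2 j k).sub measurable_const)
        ((mg2 j k).sub measurable_const)
    constructor
    · have h1 := IndepFun.integral_fun_mul_eq_mul_integral hind
        ((((mZ i j).mul (mZ i k)).sub measurable_const).aestronglyMeasurable)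
        ((((mZ l j).mul (mZ l k)).sub measurable_const).aestronglyMeasurable)
      rw [h1, EY j k i, EY j k l, mul_zero]
    · exact IndepFun.integrable_mul hind (intY j k i) (intY j k l)
  -- per-entry second moment of the empirical average
  have hsumInt : ∀ j k : Fin n, Integrable (fun ω =>
      (∑ i, (Z i ω j * Z i ω k - M j k)) * (∑ l, (Z l ω j * Z l ω k - M j k))) P := by
    intro j k
    have h1 : (fun ω => (∑ i, (Z i ω j * Z i ω k - M j k)) * (∑ l, (Z l ω j * Z l ω k - M j k)))
        = fun ω => ∑ i, ∑ l, (Z i ω j * Z i ω k - M j k) * (Z l ω j * Z l ω k - M j k) :=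
      funext fun ω => by rw [Finset.sum_mul_sum]
    rw [h1]
    refine integrable_finset_sum _ fun i _ => integrable_finset_sum _ fun l _ => ?_
    by_cases hil : i = l
    · subst hil; exact sqint j k i
    · exact (hcross j k i l hil).2
  have hsumEq : ∀ j k : Fin n,
      ∫ ω, (∑ i, (Z i ω j * Z i ω k - M j k)) * (∑ l, (Z l ω j * Z l ω k - M j k)) ∂P
        = (N:ℝ) * ((∫ ω, ς ω j * ς ω k * (ς ω j * ς ω k) ∂P) - M j k ^ 2) := by
    intro j k
    have h1 : (fun ω => (∑ i, (Z i ω j * Z i ω k - M j k)) * (∑ l, (Z l ω j * Z l ω k - M j k)))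
        = fun ω => ∑ i, ∑ l, (Z i ω j * Z i ω k - M j k) * (Z l ω j * Z l ω k - M j k) :=
      funext fun ω => by rw [Finset.sum_mul_sum]
    have hint' : ∀ (i l : Fin N),
        Integrable (fun ω => (Z i ω j * Z i ω k - M j k) * (Z l ω j * Z l ω k - M j k)) P := by
      intro i l
      by_cases hil : i = l
      · subst hil; exact sqint j k i
      · exact (hcross j k i l hil).2
    rw [h1, integral_finset_sum _ fun i _ => integrable_finset_sum _ fun l _ => hint' i l]
    have h2 : ∀ i : Fin N,
        ∫ ω, ∑ l, (Z i ω j * Z i ω k - M j k) * (Z l ω j * Z l ω k - M j k) ∂P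
          = (∫ ω, ς ω j * ς ω k * (ς ω j * ς ω k) ∂P) - M j k ^ 2 := by
      intro i
      rw [integral_finset_sum _ fun l _ => hint' i l]
      rw [Finset.sum_eq_single_of_mem i (Finset.mem_univ i)
        (fun l _ hl => (hcross j k i l (fun h => hl h.symm)).1)]
      exact EYsq j k i
    rw [Finset.sum_congr rfl fun i _ => h2 i]
    simp [Finset.sum_const, Finset.card_univ, nsmul_eq_mul]
    ring
  -- the squared Frobenius deviation
  set F : Ω → ℝ := fun ω => ∑ j, ∑ k,
    ((N:ℝ)⁻¹ * ∑ i, (Z i ω j * Z i ω k - M j k)) ^ 2 with hF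
  have hentry : ∀ (ω : Ω) (j k : Fin n),
      ((N : ℝ)⁻¹ • ∑ i, vecMulVec (Z i ω) (Z i ω) - M) j k
        = (N:ℝ)⁻¹ * ∑ i, (Z i ω j * Z i ω k - M j k) := by
    intro ω j k
    simp only [Matrix.sub_apply, Matrix.smul_apply, Matrix.sum_apply, vecMulVec_apply,
      smul_eq_mul]
    rw [Finset.sum_sub_distrib, Finset.sum_const, Finset.card_univ, Fintype.card_fin,
      mul_sub, nsmul_eq_mul]
    have : (N:ℝ)⁻¹ * ((N:ℝ) * M j k) = M j k := by field_simp
    rw [this]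
  have hf_pt : ∀ ω : Ω, frobNorm ((N : ℝ)⁻¹ • ∑ i, vecMulVec (Z i ω) (Z i ω) - M)
      = Real.sqrt (F ω) := by
    intro ω
    rw [frobNorm, hF]
    congr 1
    exact Finset.sum_congr rfl fun j _ => Finset.sum_congr rfl fun k _ => by
      rw [hentry ω j k]
  have hFnonneg : ∀ ω, 0 ≤ F ω := by
    intro ω
    exact Finset.sum_nonneg fun j _ => Finset.sum_nonneg fun k _ => sq_nonneg _
  have hFint : Integrable F P := by
    rw [hF]
    refine integrable_finset_sum _ fun j _ => integrable_finset_sum _ fun k _ => ?_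
    have h1 : (fun ω => ((N:ℝ)⁻¹ * ∑ i, (Z i ω j * Z i ω k - M j k)) ^ 2)
        = fun ω => ((N:ℝ)⁻¹)^2 * ((∑ i, (Z i ω j * Z i ω k - M j k))
            * (∑ l, (Z l ω j * Z l ω k - M j k))) := funext fun ω => by ring
    rw [h1]
    exact (hsumInt j k).const_mul _
  have hFval : ∫ ω, F ω ∂P = (N:ℝ)⁻¹ * ((∫ ω, euclNorm (ς ω) ^ 4 ∂P) - ∑ j, ∑ k, M j k ^ 2) := by
    have hterm : ∀ j k : Fin n,
        ∫ ω, ((N:ℝ)⁻¹ * ∑ i, (Z i ω j * Z i ω k - M j k)) ^ 2 ∂P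
          = (N:ℝ)⁻¹ * ((∫ ω, ς ω j * ς ω k * (ς ω j * ς ω k) ∂P) - M j k ^ 2) := by
      intro j k
      have h1 : (fun ω => ((N:ℝ)⁻¹ * ∑ i, (Z i ω j * Z i ω k - M j k)) ^ 2)
          = fun ω => ((N:ℝ)⁻¹)^2 * ((∑ i, (Z i ω j * Z i ω k - M j k))
              * (∑ l, (Z l ω j * Z l ω k - M j k))) := funext fun ω => by ring
      rw [h1, integral_const_mul, hsumEq j k]
      field_simp
    have hintterm : ∀ j k : Fin n,
        Integrable (fun ω => ((N:ℝ)⁻¹ * ∑ i, (Z i ω j * Z i ω k - M j k)) ^ 2) P := by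
      intro j k
      have h1 : (fun ω => ((N:ℝ)⁻¹ * ∑ i, (Z i ω j * Z i ω k - M j k)) ^ 2)
          = fun ω => ((N:ℝ)⁻¹)^2 * ((∑ i, (Z i ω j * Z i ω k - M j k))
              * (∑ l, (Z l ω j * Z l ω k - M j k))) := funext fun ω => by ring
      rw [h1]; exact (hsumInt j k).const_mul _
    have h4sum : ∑ j, ∑ k, ∫ ω, ς ω j * ς ω k * (ς ω j * ς ω k) ∂P
        = ∫ ω, euclNorm (ς ω) ^ 4 ∂P := by
      have h1 : ∀ j : Fin n, ∑ k, ∫ ω, ς ω j * ς ω k * (ς ω j * ς ω k) ∂P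
          = ∫ ω, ∑ k, ς ω j * ς ω k * (ς ω j * ς ω k) ∂P :=
        fun j => (integral_finset_sum _ fun k _ => hint4 j k j k).symm
      rw [Finset.sum_congr rfl fun j _ => h1 j,
        ← integral_finset_sum _ (fun j _ => integrable_finset_sum _ fun k _ => hint4 j k j k)]
      refine integral_congr_ae (Filter.Eventually.of_forall fun ω => ?_)
      exact (euclNorm_pow_four (ς ω)).symm
    rw [hF]
    rw [integral_finset_sum _ fun j _ => integrable_finset_sum _ fun k _ => hintterm j k]
    rw [Finset.sum_congr rfl fun j (_ : j ∈ Finset.univ) =>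
      (integral_finset_sum _ fun k _ => hintterm j k)]
    rw [Finset.sum_congr rfl fun j (_ : j ∈ Finset.univ) =>
      Finset.sum_congr rfl fun k _ => hterm j k]
    rw [← h4sum]
    rw [← Finset.sum_sub_distrib]
    rw [Finset.mul_sum]
    refine Finset.sum_congr rfl fun j _ => ?_
    rw [← Finset.sum_sub_distrib, Finset.mul_sum]
  -- decomposition of M
  have hMS : ∀ j k : Fin n, M j k = Sm j k + μ j * μ k := by
    intro j k
    have hfe : (fun ω => (ς ω j - μ j) * (ς ω k - μ k))
        = fun ω => ς ω j * ς ω k - μ j * ς ω k - μ k * ς ω j + μ j * μ k :=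
      funext fun ω => by ring
    have hS : Sm j k = M j k - μ j * μ k := by
      have J2 : Integrable (fun ω => μ j * ς ω k) P := (hint1 k).const_mul (μ j)
      have J3 : Integrable (fun ω => μ k * ς ω j) P := (hint1 j).const_mul (μ k)
      have J12 : Integrable (fun ω => ς ω j * ς ω k - μ j * ς ω k) P := (hint2 j k).sub J2
      have J123 : Integrable (fun ω => ς ω j * ς ω k - μ j * ς ω k - μ k * ς ω j) P := J12.sub J3
      rw [hSm j k, hfe,
        integral_add J123 (integrable_const _),
        integral_sub J12 J3,
        integral_sub (hint2 j k) J2,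
        integral_const_mul, integral_const_mul, integral_const,
        ← hM j k, ← hμ j, ← hμ k]
      simp only [measure_univ, probReal_univ, ENNReal.toReal_one, smul_eq_mul, one_mul]
      ring
    rw [hS]; ring
  have hdotSm : μ ⬝ᵥ Sm.mulVec μ = ∑ j, ∑ k, μ j * Sm j k * μ k := by
    simp only [dotProduct, mulVec, Finset.mul_sum]
    exact Finset.sum_congr rfl fun j _ => Finset.sum_congr rfl fun k _ => by ring
  have hMnorm : ∑ j, ∑ k, M j k ^ 2
      = frobNorm Sm ^ 2 + 2 * (μ ⬝ᵥ Sm.mulVec μ) + euclNorm μ ^ 4 := by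
    have h1 : ∑ j, ∑ k, M j k ^ 2
        = ∑ j, ∑ k, (Sm j k ^ 2 + 2 * (μ j * Sm j k * μ k) + μ j * μ k * (μ j * μ k)) :=
      Finset.sum_congr rfl fun j _ => Finset.sum_congr rfl fun k _ => by
        rw [hMS j k]; ring
    rw [h1]
    rw [Finset.sum_congr rfl fun j (_ : j ∈ Finset.univ) => Finset.sum_add_distrib]
    rw [Finset.sum_add_distrib]
    rw [Finset.sum_congr rfl fun j (_ : j ∈ Finset.univ) => Finset.sum_add_distrib
      (f := fun k => Sm j k ^ 2) (g := fun k => 2 * (μ j * Sm j k * μ k))]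
    rw [Finset.sum_add_distrib]
    rw [frobNorm_sq, ← euclNorm_pow_four, hdotSm]
    rw [show ∑ j, ∑ k, 2 * (μ j * Sm j k * μ k) = 2 * ∑ j, ∑ k, μ j * Sm j k * μ k by
      rw [Finset.mul_sum]
      exact Finset.sum_congr rfl fun j _ => by rw [Finset.mul_sum]]
  -- the variance identity
  have hV : (∫ ω, euclNorm (ς ω) ^ 4 ∂P) - ∑ j, ∑ k, M j k ^ 2
      = 2 * Sm.trace ^ 2 + 2 * (μ ⬝ᵥ Sm.mulVec μ) := by
    rw [h4, hMnorm]; ring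
  -- bounds
  have htrSm_nonneg : 0 ≤ Sm.trace := by
    rw [Matrix.trace]
    refine Finset.sum_nonneg fun i _ => ?_
    rw [Matrix.diag_apply, hSm i i]
    exact integral_nonneg fun ω => mul_self_nonneg _
  have htr_le : Sm.trace ≤ GS.trace := by
    have h0 : 0 ≤ (GS - Sm).trace := by
      rw [Matrix.trace]
      exact Finset.sum_nonneg fun i _ => psd_diag hSmbd i
    rw [Matrix.trace_sub] at h0
    linarith
  have htrGm : μ ⬝ᵥ μ ≤ Gm.trace := by
    have h0 : 0 ≤ (Gm - vecMulVec μ μ).trace := by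
      rw [Matrix.trace]
      exact Finset.sum_nonneg fun i _ => psd_diag hμbd i
    rw [Matrix.trace_sub] at h0
    have h1 : (vecMulVec μ μ).trace = μ ⬝ᵥ μ := by
      simp [Matrix.trace, Matrix.diag, vecMulVec_apply, dotProduct]
    linarith
  have hq1 : μ ⬝ᵥ Sm.mulVec μ ≤ μ ⬝ᵥ GS.mulVec μ := by
    have h0 := psd_quad hSmbd μ
    rw [Matrix.sub_mulVec, dotProduct_sub] at h0
    linarith
  have hq2 : μ ⬝ᵥ GS.mulVec μ ≤ lamMax hGS.isHermitian * (μ ⬝ᵥ μ) :=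
    quad_le_lamMax hGS.isHermitian μ
  have hlam : 0 ≤ lamMax hGS.isHermitian := lamMax_nonneg hGS
  have hBnd : 2 * Sm.trace ^ 2 + 2 * (μ ⬝ᵥ Sm.mulVec μ)
      ≤ 2 * (GS.trace ^ 2 + lamMax hGS.isHermitian * Gm.trace) := by
    have e1 : Sm.trace ^ 2 ≤ GS.trace ^ 2 := pow_le_pow_left₀ htrSm_nonneg htr_le 2
    have e2 : μ ⬝ᵥ Sm.mulVec μ ≤ lamMax hGS.isHermitian * Gm.trace :=
      (hq1.trans hq2).trans (mul_le_mul_of_nonneg_left htrGm hlam)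
    linarith
  -- measurability of F
  have mF : Measurable F := by
    rw [hF]
    refine Finset.measurable_sum _ fun j _ => Finset.measurable_sum _ fun k _ => ?_
    exact ((Finset.measurable_sum _ fun i _ =>
      ((mZ i j).mul (mZ i k)).sub measurable_const).const_mul _).pow_const 2
  -- Markov / Chebyshev
  have hmar := mul_meas_ge_le_integral_of_nonneg
    (Filter.Eventually.of_forall hFnonneg) hFint (ε ^ 2)
  have hsub : {ω | ε ≤ Real.sqrt (F ω)} ⊆ {ω | ε ^ 2 ≤ F ω} := by
    intro ω hω
    have h0 : 0 ≤ F ω := hFnonneg ω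
    calc ε ^ 2 ≤ (Real.sqrt (F ω)) ^ 2 := pow_le_pow_left₀ hε.le hω 2
      _ = F ω := Real.sq_sqrt h0
  have hmono : (P {ω | ε ≤ Real.sqrt (F ω)}).toReal ≤ (P {ω | ε ^ 2 ≤ F ω}).toReal :=
    ENNReal.toReal_mono (measure_ne_top _ _) (measure_mono hsub)
  set B : ℝ := GS.trace ^ 2 + lamMax hGS.isHermitian * Gm.trace with hB
  have hchain : ε ^ 2 * (P {ω | ε ≤ Real.sqrt (F ω)}).toReal ≤ (N:ℝ)⁻¹ * (2 * B) := by
    calc ε ^ 2 * (P {ω | ε ≤ Real.sqrt (F ω)}).toReal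
        ≤ ε ^ 2 * (P {ω | ε ^ 2 ≤ F ω}).toReal :=
          mul_le_mul_of_nonneg_left hmono (sq_nonneg ε)
      _ ≤ ∫ ω, F ω ∂P := hmar
      _ = (N:ℝ)⁻¹ * ((∫ ω, euclNorm (ς ω) ^ 4 ∂P) - ∑ j, ∑ k, M j k ^ 2) := hFval
      _ = (N:ℝ)⁻¹ * (2 * Sm.trace ^ 2 + 2 * (μ ⬝ᵥ Sm.mulVec μ)) := by rw [hV]
      _ ≤ (N:ℝ)⁻¹ * (2 * B) := by
          refine mul_le_mul_of_nonneg_left ?_ (by positivity)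
          rw [hB]; linarith
  have hPle : (P {ω | ε ≤ Real.sqrt (F ω)}).toReal ≤ 2 / ((N:ℝ) * ε ^ 2) * B := by
    have hε2 : (0:ℝ) < ε ^ 2 := by positivity
    rw [div_mul_eq_mul_div, le_div_iff₀ (by positivity)]
    calc (P {ω | ε ≤ Real.sqrt (F ω)}).toReal * ((N:ℝ) * ε ^ 2)
        = (N:ℝ) * (ε ^ 2 * (P {ω | ε ≤ Real.sqrt (F ω)}).toReal) := by ring
      _ ≤ (N:ℝ) * ((N:ℝ)⁻¹ * (2 * B)) := mul_le_mul_of_nonneg_left hchain hNR.le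
      _ = 2 * B := by field_simp
  -- rewrite the event
  have hset : {ω | frobNorm ((N : ℝ)⁻¹ • ∑ i, vecMulVec (Z i ω) (Z i ω) - M) < ε}
      = {ω | Real.sqrt (F ω) < ε} := by
    ext ω
    simp only [Set.mem_setOf_eq, hf_pt ω]
  have hAm : MeasurableSet {ω | Real.sqrt (F ω) < ε} :=
    measurableSet_lt (Real.continuous_sqrt.measurable.comp mF) measurable_const
  have hcompl : {ω | Real.sqrt (F ω) < ε}ᶜ = {ω | ε ≤ Real.sqrt (F ω)} := by
    ext ω; simp [not_lt]
  have hPsum : (P {ω | Real.sqrt (F ω) < ε}).toReal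
      + (P {ω | ε ≤ Real.sqrt (F ω)}).toReal = 1 := by
    rw [← ENNReal.toReal_add (measure_ne_top _ _) (measure_ne_top _ _), ← hcompl,
      measure_add_measure_compl hAm]
    simp
  rw [hset]
  linarith [hPle, hPsum]
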